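/- For every integer n with 1 ≤ n < s and every q in the interval [q_{n−1}, q_n], one has L_{ξ,2}(q) = min{ L_{x_{n,t}}(q) : 0 ≤ t ≤ a_n }, where q_m = (1/2)(log Q_m − log Δ_{m−1}) for 1 ≤ m < s and q_0 = 0. -/

import Mathlib

open Pointwise

/-- Distance from a real number to the nearest integer. -/
noncomputable def nearestInt (ξ : ℝ) : ℝ := sInf (Set.range fun m : ℤ => |ξ - (m : ℝ)|)

/-- The convex body `C_ξ(e^q) = {(x,y) : |x| ≤ e^q, |xξ - y| ≤ e^{-q}}`. -/
def body (ξ q : ℝ) : Set (ℝ × ℝ) :=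
  {p : ℝ × ℝ | |p.1| ≤ Real.exp q ∧ |p.1 * ξ - p.2| ≤ Real.exp (-q)}

/-- The `j`-th successive minimum of `C_ξ(e^q)` with respect to the lattice `ℤ²`:
the smallest `λ ≥ 0` such that `λ • C_ξ(e^q)` contains at least `j` linearly
independent points of `ℤ²`. -/
noncomputable def lam (ξ q : ℝ) (j : ℕ) : ℝ :=
  sInf {l : ℝ | 0 ≤ l ∧ ∃ v : Fin j → ℤ × ℤ,
    LinearIndependent ℝ (fun i => ((((v i).1 : ℝ)), (((v i).2 : ℝ)))) ∧
    ∀ i, ((((v i).1 : ℝ)), (((v i).2 : ℝ))) ∈ l • body ξ q}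

/-- `L_{ξ,j}(q) = log λ_j(C_ξ(e^q))`. -/
noncomputable def LL (ξ : ℝ) (j : ℕ) (q : ℝ) : ℝ := Real.log (lam ξ q j)

/-- `L_x(q)`: the logarithm of the smallest `λ ≥ 0` with `x ∈ λ • C_ξ(e^q)`, namely
`log (max (|Q| e^{-q}) (|Qξ - P| e^q))`, which equals
`max (log |Q| - q) (log |Qξ - P| + q)` (the first term being omitted when `Q = 0`,
the second when `Qξ - P = 0`). -/
noncomputable def Lx (ξ : ℝ) (x : ℤ × ℤ) (q : ℝ) : ℝ :=
  Real.log (max (|(x.1 : ℝ)| * Real.exp (-q)) (|(x.1 : ℝ) * ξ - (x.2 : ℝ)| * Real.exp q))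

/-- Data of a real number `ξ ∈ [0,1/2]` together with its simple continued fraction
expansion `ξ = [0; a 1, a 2, …]`, with partial quotients `a n ≥ 1` for `1 ≤ n < s`,
where `s ∈ ℕ* ∪ {∞}` (encoded in `WithTop ℤ`), `a (s-1) ≥ 2` if `2 ≤ s < ∞`
(`s = 1` meaning `ξ = 0`), and with `Q`, `P` the denominators and numerators of its
convergents, given by the standard recurrences with initial values
`P (-1) = Q 0 = 1`, `P 0 = Q (-1) = 0`.  The fact that `[0; a 1, a 2, …]` is indeed
the continued fraction expansion of `ξ` is recorded through the value conditions
`hfin` (if `s < ∞` then `ξ = P (s-1) / Q (s-1)`) and `hinf` (if `s = ∞` then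
`P n / Q n → ξ`), which, given the constraints on the `a n`, characterize it. -/
structure CFData where
  ξ : ℝ
  s : WithTop ℤ
  a : ℤ → ℤ
  Q : ℤ → ℤ
  P : ℤ → ℤ
  hξ0 : 0 ≤ ξ
  hξhalf : ξ ≤ 1 / 2
  hs : 1 ≤ s
  ha : ∀ n : ℤ, 1 ≤ n → (n : WithTop ℤ) < s → 1 ≤ a n
  halast : ∀ n : ℤ, 2 ≤ n → (n : WithTop ℤ) = s → 2 ≤ a (n - 1)
  hQ0 : Q 0 = 1
  hQneg : Q (-1) = 0
  hP0 : P 0 = 0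
  hPneg : P (-1) = 1
  hQrec : ∀ n : ℤ, 1 ≤ n → (n : WithTop ℤ) < s → Q n = Q (n - 2) + a n * Q (n - 1)
  hPrec : ∀ n : ℤ, 1 ≤ n → (n : WithTop ℤ) < s → P n = P (n - 2) + a n * P (n - 1)
  hfin : ∀ k : ℤ, (k : WithTop ℤ) = s → ξ = (P (k - 1) : ℝ) / (Q (k - 1) : ℝ)
  hinf : s = ⊤ → Filter.Tendsto (fun n : ℕ => (P (n : ℤ) : ℝ) / (Q (n : ℤ) : ℝ))
      Filter.atTop (nhds ξ)

namespace CFData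

/-- `Δ n = |Q n • ξ - P n|`. -/
noncomputable def Δ (c : CFData) (n : ℤ) : ℝ := |(c.Q n : ℝ) * c.ξ - (c.P n : ℝ)|

/-- `Q (n,t) = Q (n-2) + t * Q (n-1)`. -/
def Qt (c : CFData) (n t : ℤ) : ℤ := c.Q (n - 2) + t * c.Q (n - 1)

/-- `P (n,t) = P (n-2) + t * P (n-1)`. -/
def Pt (c : CFData) (n t : ℤ) : ℤ := c.P (n - 2) + t * c.P (n - 1)

/-- `Δ (n,t) = |Q (n,t) • ξ - P (n,t)|`. -/
noncomputable def Δt (c : CFData) (n t : ℤ) : ℝ := |(c.Qt n t : ℝ) * c.ξ - (c.Pt n t : ℝ)|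

/-- `q n = (log (Q n) - log (Δ (n-1))) / 2`; in particular `q 0 = 0`. -/
noncomputable def qcrit (c : CFData) (n : ℤ) : ℝ :=
  (Real.log (c.Q n : ℝ) - Real.log (c.Δ (n - 1))) / 2

end CFData


section Aux

/-- sign (-1)^m for m : ℤ -/
def eps (m : ℤ) : ℤ := if Even m then 1 else -1

lemma eps_add_one (m : ℤ) : eps (m + 1) = -eps m := by
  unfold eps
  rcases Int.even_or_odd m with h | h
  · simp [h, Int.even_add_one, Int.not_even_iff_odd]
  · have h2 : ¬ Even m := by simpa [Int.not_even_iff_odd] using h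
    simp [h2, Int.even_add_one]

lemma eps_sq (m : ℤ) : eps m * eps m = 1 := by
  unfold eps; rcases em (Even m) with h | h <;> simp [h]

lemma eps_sub_one (m : ℤ) : eps (m - 1) = -eps m := by
  have := eps_add_one (m - 1); simp at this; omega

lemma eps_eq_one_or (m : ℤ) : eps m = 1 ∨ eps m = -1 := by
  unfold eps; rcases em (Even m) with h | h <;> simp [h]

lemma eps_ne_zero (m : ℤ) : (eps m : ℝ) ≠ 0 := by
  rcases eps_eq_one_or m with h | h <;> simp [h]

lemma eps_sub_two (m : ℤ) : eps (m - 2) = eps m := by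
  have h1 := eps_sub_one m
  have h2 := eps_sub_one (m - 1)
  have h3 : m - 1 - 1 = m - 2 := by ring
  rw [h3] at h2
  omega

lemma eps_abs (m : ℤ) : |(eps m : ℝ)| = 1 := by
  rcases eps_eq_one_or m with h | h <;> simp [h]

end Aux

namespace CFData

variable (c : CFData)

/-- θ m = Q m * ξ - P m -/
noncomputable def th (m : ℤ) : ℝ := (c.Q m : ℝ) * c.ξ - (c.P m : ℝ)

/-- cross m k = Q m * P k - P m * Q k -/
def cross (m k : ℤ) : ℤ := c.Q m * c.P k - c.P m * c.Q k

lemma Δ_eq_abs_th (m : ℤ) : c.Δ m = |c.th m| := rfl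

lemma th_neg_one : c.th (-1) = -1 := by simp [th, c.hQneg, c.hPneg]

lemma lt_s_of_le {m k : ℤ} (h : m ≤ k) (hk : (k : WithTop ℤ) < c.s) : (m : WithTop ℤ) < c.s :=
  lt_of_le_of_lt (WithTop.coe_le_coe.mpr h) hk

lemma Q_facts : ∀ k : ℕ, ((k : ℤ) : WithTop ℤ) < c.s →
    1 ≤ c.Q k ∧ c.Q ((k : ℤ) - 1) ≤ c.Q k ∧ 0 ≤ c.Q ((k : ℤ) - 1) := by
  intro k
  induction k with
  | zero => intro _; norm_num [c.hQ0, c.hQneg]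
  | succ k ih =>
    intro hk
    have hcast : ((k + 1 : ℕ) : ℤ) = (k : ℤ) + 1 := by push_cast; ring
    rw [hcast] at hk ⊢
    have hk' : ((k : ℤ) : WithTop ℤ) < c.s := c.lt_s_of_le (by omega) hk
    obtain ⟨hQ1, hQmono, hQ0⟩ := ih hk'
    have ha : 1 ≤ c.a ((k : ℤ) + 1) := c.ha _ (by omega) hk
    have hrec := c.hQrec ((k : ℤ) + 1) (by omega) hk
    have e1 : (k : ℤ) + 1 - 2 = (k : ℤ) - 1 := by ring
    have e2 : (k : ℤ) + 1 - 1 = (k : ℤ) := by ring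
    rw [e1, e2] at hrec
    rw [e2]
    refine ⟨by nlinarith, by nlinarith, by omega⟩

lemma Q_pos {m : ℤ} (h0 : 0 ≤ m) (hs : (m : WithTop ℤ) < c.s) : 1 ≤ c.Q m := by
  have h := c.Q_facts m.toNat (by rwa [Int.toNat_of_nonneg h0])
  rw [Int.toNat_of_nonneg h0] at h
  exact h.1

lemma Q_nonneg {m : ℤ} (h0 : -1 ≤ m) (hs : (m : WithTop ℤ) < c.s) : 0 ≤ c.Q m := by
  rcases eq_or_lt_of_le h0 with h | h
  · rw [← h]; simp [c.hQneg]
  · have := c.Q_pos (by omega) hs; omega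

lemma Q_mono {m : ℤ} (h0 : 0 ≤ m) (hs : (m : WithTop ℤ) < c.s) : c.Q (m - 1) ≤ c.Q m := by
  have h := c.Q_facts m.toNat (by rwa [Int.toNat_of_nonneg h0])
  rw [Int.toNat_of_nonneg h0] at h
  exact h.2.1

lemma det_nat : ∀ k : ℕ, ((k : ℤ) : WithTop ℤ) < c.s →
    c.Q k * c.P ((k : ℤ) - 1) - c.P k * c.Q ((k : ℤ) - 1) = eps k := by
  intro k
  induction k with
  | zero => intro _; norm_num [c.hQ0, c.hQneg, c.hP0, c.hPneg, eps]
  | succ k ih =>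
    intro hk
    have hcast : ((k + 1 : ℕ) : ℤ) = (k : ℤ) + 1 := by push_cast; ring
    rw [hcast] at hk ⊢
    have hk' : ((k : ℤ) : WithTop ℤ) < c.s := c.lt_s_of_le (by omega) hk
    have hd := ih hk'
    have hQ := c.hQrec ((k : ℤ) + 1) (by omega) hk
    have hP := c.hPrec ((k : ℤ) + 1) (by omega) hk
    have e1 : (k : ℤ) + 1 - 2 = (k : ℤ) - 1 := by ring
    have e2 : (k : ℤ) + 1 - 1 = (k : ℤ) := by ring
    rw [e1, e2] at hQ hP
    rw [e2, hQ, hP, eps_add_one]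
    linear_combination (-1 : ℤ) * hd

lemma det_int {m : ℤ} (h0 : 0 ≤ m) (hs : (m : WithTop ℤ) < c.s) :
    c.Q m * c.P (m - 1) - c.P m * c.Q (m - 1) = eps m := by
  have h := c.det_nat m.toNat (by rwa [Int.toNat_of_nonneg h0])
  rwa [Int.toNat_of_nonneg h0] at h

lemma cross_pos : ∀ d : ℕ, ∀ m : ℤ, -1 ≤ m → (((m + d : ℤ)) : WithTop ℤ) < c.s →
    0 ≤ eps m * c.cross m (m + d) ∧ (1 ≤ d → 1 ≤ eps m * c.cross m (m + d)) := by
  intro d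
  induction d using Nat.strong_induction_on with
  | _ d ih =>
    match d with
    | 0 =>
      intro m h0 hs
      have e : m + ((0:ℕ):ℤ) = m := by push_cast; ring
      rw [e]
      have h : c.cross m m = 0 := by unfold cross; ring
      rw [h]
      norm_num
    | 1 =>
      intro m h0 hs
      have e0 : ((1 : ℕ) : ℤ) = 1 := by norm_num
      rw [e0] at hs ⊢
      have hd := c.det_int (m := m + 1) (by omega) hs
      have e1 : m + 1 - 1 = m := by ring
      rw [e1] at hd
      have hc : c.cross m (m + 1) = eps m := by
        have he : eps (m + 1) = -eps m := eps_add_one m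
        unfold cross
        linear_combination -hd - he
      rw [hc, eps_sq]
      norm_num
    | (d + 2) =>
      intro m h0 hs
      have ecast : ((d + 2 : ℕ) : ℤ) = (d : ℤ) + 2 := by push_cast; ring
      rw [ecast] at hs ⊢
      have hk1 : (1 : ℤ) ≤ m + ((d : ℤ) + 2) := by omega
      have hQ := c.hQrec (m + ((d : ℤ) + 2)) hk1 hs
      have hP := c.hPrec (m + ((d : ℤ) + 2)) hk1 hs
      have ha : 1 ≤ c.a (m + ((d : ℤ) + 2)) := c.ha _ hk1 hs
      have e1 : m + ((d : ℤ) + 2) - 2 = m + (d : ℤ) := by ring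
      have e2 : m + ((d : ℤ) + 2) - 1 = m + ((d : ℤ) + 1) := by ring
      rw [e1, e2] at hQ hP
      have hrec : c.cross m (m + ((d : ℤ) + 2)) =
          c.cross m (m + (d : ℤ)) + c.a (m + ((d : ℤ) + 2)) * c.cross m (m + ((d : ℤ) + 1)) := by
        unfold cross; rw [hQ, hP]; ring
      have ih0 := ih d (by omega) m h0 (c.lt_s_of_le (by omega) hs)
      have ih1 := ih (d + 1) (by omega) m h0 (by
        have : ((d + 1 : ℕ) : ℤ) = (d : ℤ) + 1 := by push_cast; ring
        rw [this]
        exact c.lt_s_of_le (by omega) hs)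
      have hcast1 : ((d + 1 : ℕ) : ℤ) = (d : ℤ) + 1 := by push_cast; ring
      rw [hcast1] at ih1
      have h1 := ih0.1
      have h2 := ih1.2 (by omega)
      constructor
      · rw [hrec]; nlinarith
      · intro _; rw [hrec]; nlinarith

lemma th_rec {m : ℤ} (h1 : 1 ≤ m) (hs : (m : WithTop ℤ) < c.s) :
    c.th m = c.th (m - 2) + (c.a m : ℝ) * c.th (m - 1) := by
  have hQ := c.hQrec m h1 hs
  have hP := c.hPrec m h1 hs
  unfold th
  rw [hQ, hP]
  push_cast
  ring

lemma th_det {r : ℤ} (h0 : 0 ≤ r) (hs : (r : WithTop ℤ) < c.s) :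
    (c.Q r : ℝ) * c.th (r - 1) - (c.Q (r - 1) : ℝ) * c.th r = -(eps r : ℝ) := by
  have hd := c.det_int h0 hs
  have hd' : (c.Q r : ℝ) * (c.P (r - 1) : ℝ) - (c.P r : ℝ) * (c.Q (r - 1) : ℝ) = (eps r : ℝ) := by
    exact_mod_cast hd
  unfold th
  linear_combination -hd'

lemma th_eq_cross_div {N : ℤ} (m : ℤ) (hN : (N : WithTop ℤ) = c.s) :
    c.th m = (c.cross m (N - 1) : ℝ) / (c.Q (N - 1) : ℝ) := by
  have h1N : (1 : ℤ) ≤ N := by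
    have h := c.hs; rw [← hN] at h; exact_mod_cast h
  have hsN : ((N - 1 : ℤ) : WithTop ℤ) < c.s := by
    rw [← hN]; exact WithTop.coe_lt_coe.mpr (by omega)
  have hQ : (1 : ℤ) ≤ c.Q (N - 1) := c.Q_pos (by omega) hsN
  have hQR : (0 : ℝ) < (c.Q (N - 1) : ℝ) := by exact_mod_cast hQ
  have hx := c.hfin N hN
  unfold th cross
  rw [hx]
  push_cast
  field_simp

lemma th_sign {m : ℤ} (h0 : -1 ≤ m) (hs : (m : WithTop ℤ) < c.s) :
    0 ≤ (eps m : ℝ) * c.th m := by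
  rcases eq_or_ne c.s ⊤ with htop | htop
  · have hlim := c.hinf htop
    have h1 : Filter.Tendsto
        (fun k : ℕ => (eps m : ℝ) *
          ((c.Q m : ℝ) * ((c.P (k : ℤ) : ℝ) / (c.Q (k : ℤ) : ℝ)) - (c.P m : ℝ)))
        Filter.atTop (nhds ((eps m : ℝ) * c.th m)) := by
      unfold th
      exact ((hlim.const_mul _).sub_const _).const_mul _
    refine ge_of_tendsto h1 ?_
    refine Filter.eventually_atTop.mpr ⟨(m + 1).toNat, fun k hk => ?_⟩
    have hk' : (((m + 1).toNat : ℤ)) ≤ (k : ℤ) := by exact_mod_cast hk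
    have hmk : m ≤ (k : ℤ) := by omega
    have hks : (((k : ℤ)) : WithTop ℤ) < c.s := by rw [htop]; exact WithTop.coe_lt_top _
    have hQk : (1 : ℤ) ≤ c.Q (k : ℤ) := c.Q_pos (by positivity) hks
    have hQkR : (0 : ℝ) < (c.Q (k : ℤ) : ℝ) := by exact_mod_cast hQk
    obtain ⟨d, hd⟩ : ∃ d : ℕ, (k : ℤ) = m + d := ⟨((k : ℤ) - m).toNat, by omega⟩
    have hcr := (c.cross_pos d m h0 (by rw [← hd]; exact hks)).1
    have heq : (c.Q m : ℝ) * ((c.P (k : ℤ) : ℝ) / (c.Q (k : ℤ) : ℝ)) - (c.P m : ℝ)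
        = (c.cross m (k : ℤ) : ℝ) / (c.Q (k : ℤ) : ℝ) := by
      unfold cross; push_cast; field_simp
    rw [heq, hd]
    have heq2 : (eps m : ℝ) * ((c.cross m (m + (d : ℤ)) : ℝ) / (c.Q (m + (d : ℤ)) : ℝ))
        = ((eps m * c.cross m (m + (d : ℤ)) : ℤ) : ℝ) / (c.Q (m + (d : ℤ)) : ℝ) := by
      push_cast; ring
    rw [heq2]
    apply div_nonneg
    · exact_mod_cast hcr
    · rw [← hd]; exact le_of_lt hQkR
  · obtain ⟨N, hN⟩ := WithTop.ne_top_iff_exists.mp htop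
    have hmN : m < N := by
      rw [← hN] at hs; exact_mod_cast hs
    have h1N : (1 : ℤ) ≤ N := by
      have h := c.hs; rw [← hN] at h; exact_mod_cast h
    obtain ⟨d, hd⟩ : ∃ d : ℕ, N - 1 = m + d := ⟨(N - 1 - m).toNat, by omega⟩
    have hsN : ((N - 1 : ℤ) : WithTop ℤ) < c.s := by
      rw [← hN]; exact WithTop.coe_lt_coe.mpr (by omega)
    have hcr := (c.cross_pos d m h0 (by rw [← hd]; exact hsN)).1
    have hQ : (1 : ℤ) ≤ c.Q (N - 1) := c.Q_pos (by omega) hsN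
    have hQR : (0 : ℝ) < (c.Q (N - 1) : ℝ) := by exact_mod_cast hQ
    rw [c.th_eq_cross_div m hN, hd]
    have heq2 : (eps m : ℝ) * ((c.cross m (m + (d : ℤ)) : ℝ) / (c.Q (m + (d : ℤ)) : ℝ))
        = ((eps m * c.cross m (m + (d : ℤ)) : ℤ) : ℝ) / (c.Q (m + (d : ℤ)) : ℝ) := by
      push_cast; ring
    rw [heq2]
    apply div_nonneg
    · exact_mod_cast hcr
    · rw [← hd]; exact le_of_lt hQR

lemma th_pos {m : ℤ} (h0 : -1 ≤ m) (hs : ((m + 1 : ℤ) : WithTop ℤ) < c.s) :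
    0 < (eps m : ℝ) * c.th m := by
  rcases eq_or_ne c.s ⊤ with htop | htop
  · rcases eq_or_lt_of_le h0 with hm1 | hm0
    · rw [← hm1, th_neg_one]
      have : eps (-1) = -1 := by norm_num [eps]
      rw [this]; norm_num
    · have hm0' : 0 ≤ m := by omega
      by_contra hle
      push_neg at hle
      have top_lt : ∀ r : ℤ, ((r : ℤ) : WithTop ℤ) < c.s := fun r => by
        rw [htop]; exact WithTop.coe_lt_top _
      have h1 := c.th_sign h0 (top_lt m)
      have hth0 : (eps m : ℝ) * c.th m = 0 := le_antisymm hle h1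
      set D : ℤ → ℝ := fun r => (eps r : ℝ) * c.th r with hD
      have hDsign : ∀ r : ℤ, -1 ≤ r → 0 ≤ D r := fun r hr => c.th_sign hr (top_lt r)
      have hI : ∀ r : ℤ, 0 ≤ r → (c.Q r : ℝ) * D (r - 1) + (c.Q (r - 1) : ℝ) * D r = 1 := by
        intro r hr
        have hdet := c.th_det hr (top_lt r)
        have he : (eps (r - 1) : ℝ) = -(eps r : ℝ) := by exact_mod_cast eps_sub_one r
        have he2 : (eps r : ℝ) * (eps r : ℝ) = 1 := by exact_mod_cast eps_sq r
        simp only [hD]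
        linear_combination (-(eps r : ℝ)) * hdet + ((c.Q r : ℝ) * c.th (r - 1)) * he + he2
      have hQm : (1 : ℤ) ≤ c.Q m := c.Q_pos hm0' (top_lt m)
      have hQm1 : (1 : ℤ) ≤ c.Q (m + 1) := c.Q_pos (by omega) (top_lt _)
      have ha2 : 1 ≤ c.a (m + 2) := c.ha _ (by omega) (top_lt _)
      have hQrec2 := c.hQrec (m + 2) (by omega) (top_lt _)
      have e1 : m + 2 - 2 = m := by ring
      have e2 : m + 2 - 1 = m + 1 := by ring
      have e3 : m + 1 - 1 = m := by ring
      rw [e1, e2] at hQrec2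
      have I2 := hI (m + 1) (by omega)
      have I3 := hI (m + 2) (by omega)
      rw [e3] at I2
      rw [e2] at I3
      have hDm : D m = 0 := hth0
      have hd2 : 0 ≤ D (m + 1) := hDsign _ (by omega)
      have hd3 : 0 ≤ D (m + 2) := hDsign _ (by omega)
      rw [hDm, mul_zero, zero_add] at I2
      have rQm : (1 : ℝ) ≤ (c.Q m : ℝ) := by exact_mod_cast hQm
      have rQm1 : (1 : ℝ) ≤ (c.Q (m + 1) : ℝ) := by exact_mod_cast hQm1
      have ra2 : (1 : ℝ) ≤ (c.a (m + 2) : ℝ) := by exact_mod_cast ha2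
      have rrec : (c.Q (m + 2) : ℝ) = (c.Q m : ℝ) + (c.a (m + 2) : ℝ) * (c.Q (m + 1) : ℝ) := by
        exact_mod_cast hQrec2
      have hD1pos : 0 < D (m + 1) := by
        rcases eq_or_lt_of_le hd2 with h | h
        · rw [← h, mul_zero] at I2; norm_num at I2
        · exact h
      have key : (c.Q (m + 2) : ℝ) * D (m + 1) ≤ 1 := by
        have h4 : 0 ≤ (c.Q (m + 1) : ℝ) * D (m + 2) :=
          mul_nonneg (by linarith) hd3
        linarith
      have expand : (c.Q (m + 2) : ℝ) * D (m + 1)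
          = (c.Q m : ℝ) * D (m + 1) + ((c.a (m + 2) : ℝ) * (c.Q (m + 1) : ℝ)) * D (m + 1) := by
        rw [rrec]; ring
      have h5 : (1 : ℝ) ≤ (c.a (m + 2) : ℝ) * (c.Q (m + 1) : ℝ) := by nlinarith
      have h6 : D (m + 1) ≤ ((c.a (m + 2) : ℝ) * (c.Q (m + 1) : ℝ)) * D (m + 1) := by
        nlinarith
      linarith
  · obtain ⟨N, hN⟩ := WithTop.ne_top_iff_exists.mp htop
    have hmN : m + 1 < N := by rw [← hN] at hs; exact_mod_cast hs
    obtain ⟨d, hd⟩ : ∃ d : ℕ, N - 1 = m + d := ⟨(N - 1 - m).toNat, by omega⟩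
    have hd1 : 1 ≤ d := by omega
    have hsN : ((N - 1 : ℤ) : WithTop ℤ) < c.s := by
      rw [← hN]; exact WithTop.coe_lt_coe.mpr (by omega)
    have hcr := (c.cross_pos d m h0 (by rw [← hd]; exact hsN)).2 hd1
    have hQ : (1 : ℤ) ≤ c.Q (N - 1) := c.Q_pos (by omega) hsN
    have hQR : (0 : ℝ) < (c.Q (N - 1) : ℝ) := by exact_mod_cast hQ
    rw [c.th_eq_cross_div m hN, hd]
    have heq2 : (eps m : ℝ) * ((c.cross m (m + (d : ℤ)) : ℝ) / (c.Q (m + (d : ℤ)) : ℝ))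
        = ((eps m * c.cross m (m + (d : ℤ)) : ℤ) : ℝ) / (c.Q (m + (d : ℤ)) : ℝ) := by
      push_cast; ring
    rw [heq2]
    apply div_pos
    · exact_mod_cast lt_of_lt_of_le zero_lt_one (by exact_mod_cast hcr)
    · rw [← hd]; exact hQR

lemma eps_th_eq_Δ {m : ℤ} (h0 : -1 ≤ m) (hs : (m : WithTop ℤ) < c.s) :
    (eps m : ℝ) * c.th m = c.Δ m := by
  have h := c.th_sign h0 hs
  rw [Δ_eq_abs_th, ← abs_of_nonneg h, abs_mul, eps_abs, one_mul]

lemma Δ_pos {m : ℤ} (h0 : -1 ≤ m) (hs : ((m + 1 : ℤ) : WithTop ℤ) < c.s) :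
    0 < c.Δ m := by
  rw [← c.eps_th_eq_Δ h0 (c.lt_s_of_le (by omega) hs)]
  exact c.th_pos h0 hs

lemma Δ_rec {m : ℤ} (h1 : 1 ≤ m) (hs : (m : WithTop ℤ) < c.s) :
    c.Δ m = c.Δ (m - 2) - (c.a m : ℝ) * c.Δ (m - 1) := by
  have hm1s : ((m - 1 : ℤ) : WithTop ℤ) < c.s := c.lt_s_of_le (by omega) hs
  have hm2s : ((m - 2 : ℤ) : WithTop ℤ) < c.s := c.lt_s_of_le (by omega) hs
  have hth1 := c.eps_th_eq_Δ (m := m - 1) (by omega) hm1s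
  have hth2 := c.eps_th_eq_Δ (m := m - 2) (by omega) hm2s
  have hthn := c.eps_th_eq_Δ (m := m) (by omega) hs
  have he1 : (eps (m - 1) : ℝ) = -(eps m : ℝ) := by exact_mod_cast eps_sub_one m
  have he2 : (eps (m - 2) : ℝ) = (eps m : ℝ) := by exact_mod_cast eps_sub_two m
  have hr := c.th_rec h1 hs
  have hE1 : (eps m : ℝ) * c.th (m - 1) = -c.Δ (m - 1) := by
    linear_combination (-1 : ℝ) * hth1 + c.th (m - 1) * he1
  have hE2 : (eps m : ℝ) * c.th (m - 2) = c.Δ (m - 2) := by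
    linear_combination hth2 - c.th (m - 2) * he2
  linear_combination (-1 : ℝ) * hthn + hE2 + (c.a m : ℝ) * hE1 + (eps m : ℝ) * hr

end CFData

section FvAux

/-- The scaling factor needed to put `x` in the body. -/
noncomputable def Fv (ξ q : ℝ) (x : ℤ × ℤ) : ℝ :=
  max (|(x.1 : ℝ)| * Real.exp (-q)) (|(x.1 : ℝ) * ξ - (x.2 : ℝ)| * Real.exp q)

lemma Lx_eq_log_Fv (ξ q : ℝ) (x : ℤ × ℤ) : Lx ξ x q = Real.log (Fv ξ q x) := rfl

lemma exp_mul_exp_neg (q : ℝ) : Real.exp q * Real.exp (-q) = 1 := by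
  rw [← Real.exp_add]; norm_num

lemma Fv_neg (ξ q : ℝ) (a b : ℤ) : Fv ξ q (-a, -b) = Fv ξ q (a, b) := by
  unfold Fv
  push_cast
  rw [abs_neg]
  congr 2
  rw [show -(a : ℝ) * ξ - -(b : ℝ) = -((a : ℝ) * ξ - b) by ring, abs_neg]

lemma Fv_le_of_mem {ξ q l : ℝ} (hl : 0 ≤ l) {x : ℤ × ℤ}
    (h : (((x.1 : ℝ), (x.2 : ℝ)) : ℝ × ℝ) ∈ l • body ξ q) : Fv ξ q x ≤ l := by
  obtain ⟨p, hp, hpx⟩ := Set.mem_smul_set.mp h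
  obtain ⟨hp1, hp2⟩ := hp
  have h1 : l * p.1 = (x.1 : ℝ) := by
    have := congrArg Prod.fst hpx; simpa using this
  have h2 : l * p.2 = (x.2 : ℝ) := by
    have := congrArg Prod.snd hpx; simpa using this
  have he := exp_mul_exp_neg q
  have hepos := Real.exp_pos q
  have hemneg := Real.exp_pos (-q)
  apply max_le
  · have : |(x.1 : ℝ)| ≤ l * Real.exp q := by
      rw [← h1, abs_mul, abs_of_nonneg hl]
      exact mul_le_mul_of_nonneg_left hp1 hl
    calc |(x.1 : ℝ)| * Real.exp (-q) ≤ (l * Real.exp q) * Real.exp (-q) :=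
          mul_le_mul_of_nonneg_right this hemneg.le
      _ = l := by rw [mul_assoc, he, mul_one]
  · have : |(x.1 : ℝ) * ξ - (x.2 : ℝ)| ≤ l * Real.exp (-q) := by
      rw [← h1, ← h2, show l * p.1 * ξ - l * p.2 = l * (p.1 * ξ - p.2) by ring,
        abs_mul, abs_of_nonneg hl]
      exact mul_le_mul_of_nonneg_left hp2 hl
    calc |(x.1 : ℝ) * ξ - (x.2 : ℝ)| * Real.exp q ≤ (l * Real.exp (-q)) * Real.exp q :=
          mul_le_mul_of_nonneg_right this hepos.le
      _ = l := by rw [mul_assoc, mul_comm (Real.exp (-q)), he, mul_one]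

lemma mem_of_Fv_le {ξ q l : ℝ} (hl : 0 < l) {x : ℤ × ℤ} (h : Fv ξ q x ≤ l) :
    (((x.1 : ℝ), (x.2 : ℝ)) : ℝ × ℝ) ∈ l • body ξ q := by
  have h1 : |(x.1 : ℝ)| * Real.exp (-q) ≤ l := le_trans (le_max_left _ _) h
  have h2 : |(x.1 : ℝ) * ξ - (x.2 : ℝ)| * Real.exp q ≤ l := le_trans (le_max_right _ _) h
  have he := exp_mul_exp_neg q
  have hepos := Real.exp_pos q
  have hemneg := Real.exp_pos (-q)
  refine Set.mem_smul_set.mpr ⟨((x.1 : ℝ) / l, (x.2 : ℝ) / l), ⟨?_, ?_⟩, ?_⟩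
  · show |(x.1 : ℝ) / l| ≤ Real.exp q
    rw [abs_div, abs_of_pos hl, div_le_iff₀ hl]
    nlinarith
  · show |(x.1 : ℝ) / l * ξ - (x.2 : ℝ) / l| ≤ Real.exp (-q)
    rw [show (x.1 : ℝ) / l * ξ - (x.2 : ℝ) / l = ((x.1 : ℝ) * ξ - (x.2 : ℝ)) / l by
      field_simp, abs_div, abs_of_pos hl, div_le_iff₀ hl]
    nlinarith
  · rw [Prod.smul_mk, smul_eq_mul, smul_eq_mul]
    rw [mul_div_cancel₀ _ hl.ne', mul_div_cancel₀ _ hl.ne']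

end FvAux

lemma Fv_mk (ξ q : ℝ) (a b : ℤ) :
    Fv ξ q (a, b) = max (|(a : ℝ)| * Real.exp (-q)) (|(a : ℝ) * ξ - (b : ℝ)| * Real.exp q) := rfl


set_option maxHeartbeats 2000000 in
theorem stmt15 (c : CFData) (n : ℤ) (hn : 1 ≤ n) (hns : (n : WithTop ℤ) < c.s)
    (q : ℝ) (hq : q ∈ Set.Icc (c.qcrit (n - 1)) (c.qcrit n)) :
    IsLeast {v : ℝ | ∃ t : ℤ, 0 ≤ t ∧ t ≤ c.a n ∧ v = Lx c.ξ (c.Qt n t, c.Pt n t) q}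
      (LL c.ξ 2 q) := by
  obtain ⟨hq1, hq2⟩ := hq
  have hepos := Real.exp_pos q
  have hemneg := Real.exp_pos (-q)
  -- index facts
  have hn1s : ((n - 1 : ℤ) : WithTop ℤ) < c.s := c.lt_s_of_le (by omega) hns
  have hn2s : ((n - 2 : ℤ) : WithTop ℤ) < c.s := c.lt_s_of_le (by omega) hns
  have hQn1 : (1 : ℤ) ≤ c.Q (n - 1) := c.Q_pos (by omega) hn1s
  have hQn2 : (0 : ℤ) ≤ c.Q (n - 2) := c.Q_nonneg (by omega) hn2s
  have hQn : (1 : ℤ) ≤ c.Q n := c.Q_pos (by omega) hns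
  have hQmono : c.Q (n - 2) ≤ c.Q (n - 1) := by
    have h := c.Q_mono (m := n - 1) (by omega) hn1s
    rwa [show n - 1 - 1 = n - 2 from by ring] at h
  have ha : 1 ≤ c.a n := c.ha n hn hns
  have hQrec := c.hQrec n hn hns
  -- real casts
  have rQn1 : (1 : ℝ) ≤ (c.Q (n - 1) : ℝ) := by exact_mod_cast hQn1
  have rQn2 : (0 : ℝ) ≤ (c.Q (n - 2) : ℝ) := by exact_mod_cast hQn2
  have rQn : (1 : ℝ) ≤ (c.Q n : ℝ) := by exact_mod_cast hQn
  have rQmono : (c.Q (n - 2) : ℝ) ≤ (c.Q (n - 1) : ℝ) := by exact_mod_cast hQmono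
  have ra : (1 : ℝ) ≤ (c.a n : ℝ) := by exact_mod_cast ha
  -- theta facts
  have hth1 : (eps (n - 1) : ℝ) * c.th (n - 1) = c.Δ (n - 1) := c.eps_th_eq_Δ (by omega) hn1s
  have hth2 : (eps (n - 2) : ℝ) * c.th (n - 2) = c.Δ (n - 2) := c.eps_th_eq_Δ (by omega) hn2s
  have hΔ1pos : 0 < c.Δ (n - 1) := by
    have h := c.Δ_pos (m := n - 1) (by omega)
      (by rw [show n - 1 + 1 = n from by ring]; exact hns)
    exact h
  have hΔ2pos : 0 < c.Δ (n - 2) := by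
    have h := c.Δ_pos (m := n - 2) (by omega)
      (by rw [show n - 2 + 1 = n - 1 from by ring]; exact hn1s)
    exact h
  have hΔn : 0 ≤ c.Δ n := abs_nonneg _
  have he1 : (eps (n - 1) : ℝ) = -(eps n : ℝ) := by exact_mod_cast eps_sub_one n
  have he2 : (eps (n - 2) : ℝ) = (eps n : ℝ) := by exact_mod_cast eps_sub_two n
  have hE1 : (eps n : ℝ) * c.th (n - 1) = -c.Δ (n - 1) := by
    linear_combination (-1 : ℝ) * hth1 + c.th (n - 1) * he1
  have hE2 : (eps n : ℝ) * c.th (n - 2) = c.Δ (n - 2) := by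
    linear_combination hth2 - c.th (n - 2) * he2
  have hΔrec : c.Δ n = c.Δ (n - 2) - (c.a n : ℝ) * c.Δ (n - 1) := c.Δ_rec hn hns
  have hΔmono : (c.a n : ℝ) * c.Δ (n - 1) ≤ c.Δ (n - 2) := by linarith
  -- q-range keys
  have hqc1 : c.qcrit (n - 1) = (Real.log (c.Q (n - 1) : ℝ) - Real.log (c.Δ (n - 2))) / 2 := by
    unfold CFData.qcrit; rw [show n - 1 - 1 = n - 2 from by ring]
  have key1 : (c.Q (n - 1) : ℝ) * Real.exp (-q) ≤ c.Δ (n - 2) * Real.exp q := by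
    rw [hqc1] at hq1
    have hlog : Real.log (c.Q (n - 1) : ℝ) ≤ Real.log (c.Δ (n - 2)) + 2 * q := by linarith
    have h1 : (c.Q (n - 1) : ℝ) ≤ c.Δ (n - 2) * Real.exp (2 * q) := by
      calc (c.Q (n - 1) : ℝ) = Real.exp (Real.log (c.Q (n - 1) : ℝ)) :=
            (Real.exp_log (by linarith)).symm
        _ ≤ Real.exp (Real.log (c.Δ (n - 2)) + 2 * q) := Real.exp_le_exp.mpr hlog
        _ = c.Δ (n - 2) * Real.exp (2 * q) := by
            rw [Real.exp_add, Real.exp_log hΔ2pos]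
    calc (c.Q (n - 1) : ℝ) * Real.exp (-q)
        ≤ (c.Δ (n - 2) * Real.exp (2 * q)) * Real.exp (-q) :=
          mul_le_mul_of_nonneg_right h1 hemneg.le
      _ = c.Δ (n - 2) * Real.exp q := by
          rw [mul_assoc, ← Real.exp_add, show 2 * q + -q = q from by ring]
  have key2 : c.Δ (n - 1) * Real.exp q ≤ (c.Q n : ℝ) * Real.exp (-q) := by
    have hq2' : c.qcrit n = (Real.log (c.Q n : ℝ) - Real.log (c.Δ (n - 1))) / 2 := rfl
    rw [hq2'] at hq2
    have hlog : Real.log (c.Δ (n - 1)) ≤ Real.log (c.Q n : ℝ) + -(2 * q) := by linarith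
    have h1 : c.Δ (n - 1) ≤ (c.Q n : ℝ) * Real.exp (-(2 * q)) := by
      calc c.Δ (n - 1) = Real.exp (Real.log (c.Δ (n - 1))) := (Real.exp_log hΔ1pos).symm
        _ ≤ Real.exp (Real.log (c.Q n : ℝ) + -(2 * q)) := Real.exp_le_exp.mpr hlog
        _ = (c.Q n : ℝ) * Real.exp (-(2 * q)) := by
            rw [Real.exp_add, Real.exp_log (by linarith)]
    calc c.Δ (n - 1) * Real.exp q ≤ ((c.Q n : ℝ) * Real.exp (-(2 * q))) * Real.exp q :=
          mul_le_mul_of_nonneg_right h1 hepos.le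
      _ = (c.Q n : ℝ) * Real.exp (-q) := by
          rw [mul_assoc, ← Real.exp_add, show -(2 * q) + q = -q from by ring]
  -- Δ n * e^q ≤ Q n * e^{-q}
  have hΔnkey : c.Δ n * Real.exp q ≤ (c.Q n : ℝ) * Real.exp (-q) := by
    by_cases hcase : ((n + 1 : ℤ) : WithTop ℤ) < c.s
    · have ha1 : 1 ≤ c.a (n + 1) := c.ha _ (by omega) hcase
      have hΔrec1 := c.Δ_rec (m := n + 1) (by omega) hcase
      rw [show n + 1 - 2 = n - 1 from by ring, show n + 1 - 1 = n from by ring] at hΔrec1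
      have hΔn1pos : 0 ≤ c.Δ (n + 1) := abs_nonneg _
      have ra1 : (1 : ℝ) ≤ (c.a (n + 1) : ℝ) := by exact_mod_cast ha1
      have hdle : c.Δ n ≤ c.Δ (n - 1) := by
        nlinarith [mul_nonneg (by linarith : (0 : ℝ) ≤ (c.a (n + 1) : ℝ) - 1) hΔn]
      calc c.Δ n * Real.exp q ≤ c.Δ (n - 1) * Real.exp q :=
            mul_le_mul_of_nonneg_right hdle hepos.le
        _ ≤ _ := key2
    · have hsne : c.s ≠ ⊤ := by
        intro h; rw [h] at hcase; exact hcase (WithTop.coe_lt_top _)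
      obtain ⟨N, hN⟩ := WithTop.ne_top_iff_exists.mp hsne
      have hNn : N = n + 1 := by
        have h1 : n < N := by rw [← hN] at hns; exact_mod_cast hns
        have h2 : ¬ (n + 1 < N) := by
          intro h; exact hcase (by rw [← hN]; exact_mod_cast h)
        omega
      have hx := c.hfin N hN
      rw [hNn, show n + 1 - 1 = n from by ring] at hx
      have hΔ0 : c.Δ n = 0 := by
        unfold CFData.Δ
        rw [hx]
        have hQne : (c.Q n : ℝ) ≠ 0 := by linarith
        have hz : (c.Q n : ℝ) * ((c.P n : ℝ) / (c.Q n : ℝ)) - (c.P n : ℝ) = 0 := by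
          field_simp
          ring
        rw [hz, abs_zero]
      rw [hΔ0, zero_mul]
      positivity
  -- values at the points x_{n,t}
  have hthxt : ∀ t : ℤ, ((c.Qt n t : ℝ) * c.ξ - (c.Pt n t : ℝ))
      = c.th (n - 2) + (t : ℝ) * c.th (n - 1) := by
    intro t; unfold CFData.Qt CFData.Pt CFData.th; push_cast; ring
  have hvalxt : ∀ t : ℤ, (eps n : ℝ) * ((c.Qt n t : ℝ) * c.ξ - (c.Pt n t : ℝ))
      = c.Δ (n - 2) - (t : ℝ) * c.Δ (n - 1) := by
    intro t
    rw [hthxt t]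
    linear_combination hE2 + (t : ℝ) * hE1
  have habs_xt : ∀ t : ℤ, 0 ≤ t → t ≤ c.a n →
      |(c.Qt n t : ℝ) * c.ξ - (c.Pt n t : ℝ)| = c.Δ (n - 2) - (t : ℝ) * c.Δ (n - 1) := by
    intro t ht0 ht1
    have rt1 : (t : ℝ) ≤ (c.a n : ℝ) := by exact_mod_cast ht1
    have rt0 : (0 : ℝ) ≤ (t : ℝ) := by exact_mod_cast ht0
    have hnn : 0 ≤ c.Δ (n - 2) - (t : ℝ) * c.Δ (n - 1) := by
      nlinarith [mul_le_mul_of_nonneg_right rt1 hΔ1pos.le]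
    rw [show |(c.Qt n t : ℝ) * c.ξ - (c.Pt n t : ℝ)|
        = |(eps n : ℝ) * ((c.Qt n t : ℝ) * c.ξ - (c.Pt n t : ℝ))| from by
      rw [abs_mul, eps_abs, one_mul], hvalxt t, abs_of_nonneg hnn]
  have hQt_nonneg : ∀ t : ℤ, 0 ≤ t → 0 ≤ c.Qt n t := by
    intro t ht
    unfold CFData.Qt
    have := mul_nonneg ht (show (0 : ℤ) ≤ c.Q (n - 1) by omega)
    omega
  have hFvxt : ∀ t : ℤ, 0 ≤ t → t ≤ c.a n → Fv c.ξ q (c.Qt n t, c.Pt n t)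
      = max ((c.Qt n t : ℝ) * Real.exp (-q))
        ((c.Δ (n - 2) - (t : ℝ) * c.Δ (n - 1)) * Real.exp q) := by
    intro t h1 h2
    rw [Fv_mk, habs_xt t h1 h2,
      abs_of_nonneg (show (0 : ℝ) ≤ (c.Qt n t : ℝ) by exact_mod_cast hQt_nonneg t h1)]
  -- the minimizer
  obtain ⟨tstar, htS, hmin⟩ := (Finset.Icc (0 : ℤ) (c.a n)).exists_min_image
    (fun t => Fv c.ξ q (c.Qt n t, c.Pt n t)) ⟨0, Finset.mem_Icc.mpr ⟨le_refl 0, by omega⟩⟩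
  obtain ⟨ht0, ht1⟩ := Finset.mem_Icc.mp htS
  set lamstar := Fv c.ξ q (c.Qt n tstar, c.Pt n tstar) with hlamstar
  have hmin' : ∀ t : ℤ, 0 ≤ t → t ≤ c.a n → lamstar ≤ Fv c.ξ q (c.Qt n t, c.Pt n t) :=
    fun t h1 h2 => hmin t (Finset.mem_Icc.mpr ⟨h1, h2⟩)
  have lamstar_pos : 0 < lamstar := by
    rw [hlamstar, hFvxt tstar ht0 ht1]
    by_cases h0 : c.Qt n tstar = 0
    · have h1 : tstar = 0 := by
        unfold CFData.Qt at h0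
        by_contra hne
        have h2 : 1 ≤ tstar := by omega
        nlinarith
      rw [h1]
      apply lt_max_iff.mpr
      right
      push_cast
      nlinarith
    · apply lt_max_iff.mpr
      left
      have h1 : (1 : ℝ) ≤ |(c.Qt n tstar : ℝ)| := by
        have := Int.one_le_abs h0
        calc (1 : ℝ) ≤ (|c.Qt n tstar| : ℤ) := by exact_mod_cast this
          _ = |(c.Qt n tstar : ℝ)| := by push_cast; ring
      have h2 : (0 : ℝ) ≤ (c.Qt n tstar : ℝ) := by exact_mod_cast hQt_nonneg tstar ht0
      rw [abs_of_nonneg h2] at h1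
      nlinarith
  have hQta : c.Qt n (c.a n) = c.Q n := by
    unfold CFData.Qt; exact hQrec.symm
  -- star bounds
  have star_a : lamstar ≤ (c.Q n : ℝ) * Real.exp (-q) := by
    have h := hmin' (c.a n) (by omega) le_rfl
    rw [hFvxt (c.a n) (by omega) le_rfl, hQta] at h
    have hmx : max ((c.Q n : ℝ) * Real.exp (-q))
        ((c.Δ (n - 2) - (c.a n : ℝ) * c.Δ (n - 1)) * Real.exp q)
        = (c.Q n : ℝ) * Real.exp (-q) := by
      apply max_eq_left
      rw [← hΔrec]
      exact hΔnkey
    rw [hmx] at h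
    exact h
  have star_b : lamstar ≤ c.Δ (n - 2) * Real.exp q := by
    have h := hmin' 0 le_rfl (by omega)
    rw [hFvxt 0 le_rfl (by omega)] at h
    have hq0 : c.Qt n 0 = c.Q (n - 2) := by unfold CFData.Qt; ring
    rw [hq0] at h
    refine le_trans h (max_le ?_ ?_)
    · calc (c.Q (n - 2) : ℝ) * Real.exp (-q) ≤ (c.Q (n - 1) : ℝ) * Real.exp (-q) :=
          mul_le_mul_of_nonneg_right rQmono hemneg.le
        _ ≤ _ := key1
    · apply le_of_eq
      push_cast
      ring
  -- determinant
  have hdetn1 : c.Q (n - 1) * c.P (n - 2) - c.P (n - 1) * c.Q (n - 2) = eps (n - 1) := by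
    have h := c.det_int (m := n - 1) (by omega) hn1s
    rwa [show n - 1 - 1 = n - 2 from by ring] at h
  -- F(B) ≤ lamstar
  have hFB : Fv c.ξ q (c.Q (n - 1), c.P (n - 1)) ≤ lamstar := by
    have hBv : Fv c.ξ q (c.Q (n - 1), c.P (n - 1))
        = max ((c.Q (n - 1) : ℝ) * Real.exp (-q)) (c.Δ (n - 1) * Real.exp q) := by
      rw [Fv_mk, abs_of_nonneg (show (0 : ℝ) ≤ (c.Q (n - 1) : ℝ) by linarith),
        show |(c.Q (n - 1) : ℝ) * c.ξ - (c.P (n - 1) : ℝ)| = c.Δ (n - 1) from rfl]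
    rw [hBv]
    apply max_le
    · rcases eq_or_lt_of_le ht0 with h0 | h0
      · rw [hlamstar, hFvxt tstar ht0 ht1, ← h0]
        refine le_trans ?_ (le_max_right _ _)
        have e : c.Δ (n - 2) - ((0 : ℤ) : ℝ) * c.Δ (n - 1) = c.Δ (n - 2) := by
          push_cast; ring
        rw [e]
        exact key1
      · rw [hlamstar, hFvxt tstar ht0 ht1]
        refine le_trans ?_ (le_max_left _ _)
        have h1 : c.Q (n - 1) ≤ c.Qt n tstar := by
          unfold CFData.Qt
          have h2 : 1 * c.Q (n - 1) ≤ tstar * c.Q (n - 1) :=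
            mul_le_mul_of_nonneg_right (by omega) (by omega)
          omega
        have h1R : (c.Q (n - 1) : ℝ) ≤ (c.Qt n tstar : ℝ) := by exact_mod_cast h1
        exact mul_le_mul_of_nonneg_right h1R hemneg.le
    · rcases eq_or_lt_of_le ht1 with h1 | h1
      · rw [hlamstar, hFvxt tstar ht0 ht1, h1, hQta]
        refine le_trans key2 (le_max_left _ _)
      · rw [hlamstar, hFvxt tstar ht0 ht1]
        refine le_trans ?_ (le_max_right _ _)
        have rt : (tstar : ℝ) ≤ (c.a n : ℝ) - 1 := by
          have h2 : ((tstar : ℤ) : ℝ) ≤ ((c.a n - 1 : ℤ) : ℝ) := by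
            exact_mod_cast (show tstar ≤ c.a n - 1 by omega)
          push_cast at h2
          linarith
        have h3 : c.Δ (n - 1) ≤ c.Δ (n - 2) - (tstar : ℝ) * c.Δ (n - 1) := by
          nlinarith [mul_nonneg (by linarith : (0 : ℝ) ≤ (c.a n : ℝ) - 1 - (tstar : ℝ))
            hΔ1pos.le]
        exact mul_le_mul_of_nonneg_right h3 hepos.le
  -- lower bound lemma, positive j
  have hLB1 : ∀ i j : ℤ, 1 ≤ j →
      lamstar ≤ Fv c.ξ q (i * c.Q (n - 1) + j * c.Q (n - 2),
        i * c.P (n - 1) + j * c.P (n - 2)) := by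
    intro i j hj
    have rj : (1 : ℝ) ≤ (j : ℝ) := by exact_mod_cast hj
    have hthx : ((i * c.Q (n - 1) + j * c.Q (n - 2) : ℤ) : ℝ) * c.ξ
        - ((i * c.P (n - 1) + j * c.P (n - 2) : ℤ) : ℝ)
        = (i : ℝ) * c.th (n - 1) + (j : ℝ) * c.th (n - 2) := by
      unfold CFData.th; push_cast; ring
    have hvalx : (eps n : ℝ) * (((i * c.Q (n - 1) + j * c.Q (n - 2) : ℤ) : ℝ) * c.ξ
        - ((i * c.P (n - 1) + j * c.P (n - 2) : ℤ) : ℝ))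
        = (j : ℝ) * c.Δ (n - 2) - (i : ℝ) * c.Δ (n - 1) := by
      rw [hthx]
      linear_combination (i : ℝ) * hE1 + (j : ℝ) * hE2
    have habsx : |((i * c.Q (n - 1) + j * c.Q (n - 2) : ℤ) : ℝ) * c.ξ
        - ((i * c.P (n - 1) + j * c.P (n - 2) : ℤ) : ℝ)|
        = |(j : ℝ) * c.Δ (n - 2) - (i : ℝ) * c.Δ (n - 1)| := by
      rw [show |((i * c.Q (n - 1) + j * c.Q (n - 2) : ℤ) : ℝ) * c.ξ
          - ((i * c.P (n - 1) + j * c.P (n - 2) : ℤ) : ℝ)|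
          = |(eps n : ℝ) * (((i * c.Q (n - 1) + j * c.Q (n - 2) : ℤ) : ℝ) * c.ξ
          - ((i * c.P (n - 1) + j * c.P (n - 2) : ℤ) : ℝ))| from by
        rw [abs_mul, eps_abs, one_mul], hvalx]
    have hFx : Fv c.ξ q (i * c.Q (n - 1) + j * c.Q (n - 2),
        i * c.P (n - 1) + j * c.P (n - 2))
        = max (|((i * c.Q (n - 1) + j * c.Q (n - 2) : ℤ) : ℝ)| * Real.exp (-q))
          (|(j : ℝ) * c.Δ (n - 2) - (i : ℝ) * c.Δ (n - 1)| * Real.exp q) := by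
      rw [Fv_mk, habsx]
    rcases lt_or_ge i 0 with hi | hi
    · rw [hFx]
      refine le_trans star_b (le_trans ?_ (le_max_right _ _))
      have ri : (i : ℝ) ≤ -1 := by exact_mod_cast (show i ≤ -1 by omega)
      have p1 : (0 : ℝ) ≤ ((j : ℝ) - 1) * c.Δ (n - 2) :=
        mul_nonneg (by linarith) hΔ2pos.le
      have p2 : (0 : ℝ) ≤ (-(i : ℝ)) * c.Δ (n - 1) :=
        mul_nonneg (by linarith) hΔ1pos.le
      have habs2 : c.Δ (n - 2) ≤ |(j : ℝ) * c.Δ (n - 2) - (i : ℝ) * c.Δ (n - 1)| := by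
        rw [abs_of_nonneg (by nlinarith)]
        nlinarith
      exact mul_le_mul_of_nonneg_right habs2 hepos.le
    · rcases le_or_gt i (c.a n) with hi2 | hi2
      · refine le_trans (hmin' i hi hi2) ?_
        rw [hFvxt i hi hi2, hFx]
        apply max_le_max
        · have hzq : (0 : ℤ) ≤ i * c.Q (n - 1) + j * c.Q (n - 2) := by
            have := mul_nonneg hi (show (0 : ℤ) ≤ c.Q (n - 1) by omega)
            have := mul_nonneg (show (0 : ℤ) ≤ j by omega) hQn2
            omega
          have h1 : c.Qt n i ≤ i * c.Q (n - 1) + j * c.Q (n - 2) := by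
            unfold CFData.Qt
            have p2 : 1 * c.Q (n - 2) ≤ j * c.Q (n - 2) :=
              mul_le_mul_of_nonneg_right hj hQn2
            omega
          have h1R : (c.Qt n i : ℝ) ≤ |((i * c.Q (n - 1) + j * c.Q (n - 2) : ℤ) : ℝ)| := by
            rw [abs_of_nonneg (by exact_mod_cast hzq)]
            exact_mod_cast h1
          exact mul_le_mul_of_nonneg_right h1R hemneg.le
        · have ri2 : (i : ℝ) ≤ (c.a n : ℝ) := by exact_mod_cast hi2
          have ri0 : (0 : ℝ) ≤ (i : ℝ) := by exact_mod_cast hi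
          have p3 : (i : ℝ) * c.Δ (n - 1) ≤ (c.a n : ℝ) * c.Δ (n - 1) :=
            mul_le_mul_of_nonneg_right ri2 hΔ1pos.le
          have p4 : c.Δ (n - 2) ≤ (j : ℝ) * c.Δ (n - 2) :=
            le_mul_of_one_le_left hΔ2pos.le rj
          have h2 : c.Δ (n - 2) - (i : ℝ) * c.Δ (n - 1)
              ≤ |(j : ℝ) * c.Δ (n - 2) - (i : ℝ) * c.Δ (n - 1)| := by
            rw [abs_of_nonneg (by linarith)]
            linarith
          exact mul_le_mul_of_nonneg_right h2 hepos.le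
      · rw [hFx]
        refine le_trans star_a (le_trans ?_ (le_max_left _ _))
        have hzq : (0 : ℤ) ≤ i * c.Q (n - 1) + j * c.Q (n - 2) := by
          have := mul_nonneg hi (show (0 : ℤ) ≤ c.Q (n - 1) by omega)
          have := mul_nonneg (show (0 : ℤ) ≤ j by omega) hQn2
          omega
        have hZ : c.Q n ≤ i * c.Q (n - 1) + j * c.Q (n - 2) := by
          rw [hQrec]
          have p1 : c.a n * c.Q (n - 1) ≤ i * c.Q (n - 1) :=
            mul_le_mul_of_nonneg_right (by omega) (by omega)
          have p2 : 1 * c.Q (n - 2) ≤ j * c.Q (n - 2) :=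
            mul_le_mul_of_nonneg_right hj hQn2
          omega
        have h1 : (c.Q n : ℝ) ≤ |((i * c.Q (n - 1) + j * c.Q (n - 2) : ℤ) : ℝ)| := by
          rw [abs_of_nonneg (by exact_mod_cast hzq)]
          exact_mod_cast hZ
        exact mul_le_mul_of_nonneg_right h1 hemneg.le
  -- lower bound lemma, general j
  have hLB : ∀ x : ℤ × ℤ, ∀ i j : ℤ, j ≠ 0 →
      x.1 = i * c.Q (n - 1) + j * c.Q (n - 2) →
      x.2 = i * c.P (n - 1) + j * c.P (n - 2) → lamstar ≤ Fv c.ξ q x := by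
    intro x i j hj hx1 hx2
    rcases lt_or_ge 0 j with hjpos | hjle
    · have hx : x = (i * c.Q (n - 1) + j * c.Q (n - 2),
          i * c.P (n - 1) + j * c.P (n - 2)) := Prod.ext_iff.mpr ⟨hx1, hx2⟩
      rw [hx]
      exact hLB1 i j (by omega)
    · have h := hLB1 (-i) (-j) (by omega)
      have hx : x = (-(-i * c.Q (n - 1) + -j * c.Q (n - 2)),
          -(-i * c.P (n - 1) + -j * c.P (n - 2))) := by
        refine Prod.ext_iff.mpr ⟨?_, ?_⟩
        · rw [hx1]; ring
        · rw [hx2]; ring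
      rw [hx, Fv_neg]
      exact h
  -- compute the second minimum
  have hmemT : 0 ≤ lamstar ∧ ∃ v : Fin 2 → ℤ × ℤ,
      LinearIndependent ℝ (fun i => ((((v i).1 : ℝ)), (((v i).2 : ℝ)))) ∧
      ∀ i, ((((v i).1 : ℝ)), (((v i).2 : ℝ))) ∈ lamstar • body c.ξ q := by
    refine ⟨lamstar_pos.le,
      ![(c.Qt n tstar, c.Pt n tstar), (c.Q (n - 1), c.P (n - 1))], ?_, ?_⟩
    · rw [linearIndependent_fin2]
      constructor
      · simp only [Matrix.cons_val_one, Matrix.head_cons]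
        intro h
        have h1 := congrArg Prod.fst h
        simp only [Prod.fst_zero] at h1
        have : (c.Q (n - 1) : ℝ) = 0 := h1
        linarith
      · intro aa heq
        simp only [Matrix.cons_val_one, Matrix.head_cons, Matrix.cons_val_zero] at heq
        rw [Prod.smul_mk, smul_eq_mul, smul_eq_mul, Prod.mk.injEq] at heq
        obtain ⟨hc1, hc2⟩ := heq
        have hdt : c.Qt n tstar * c.P (n - 1) - c.Pt n tstar * c.Q (n - 1)
            = -eps (n - 1) := by
          unfold CFData.Qt CFData.Pt
          linear_combination (-1 : ℤ) * hdetn1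
        have hzero : (c.Qt n tstar : ℝ) * (c.P (n - 1) : ℝ)
            - (c.Pt n tstar : ℝ) * (c.Q (n - 1) : ℝ) = 0 := by
          rw [← hc1, ← hc2]; ring
        have hcast : ((c.Qt n tstar * c.P (n - 1) - c.Pt n tstar * c.Q (n - 1) : ℤ) : ℝ)
            = 0 := by
          push_cast
          linarith [hzero]
        rw [hdt] at hcast
        rcases eps_eq_one_or (n - 1) with h | h <;> rw [h] at hcast <;> norm_num at hcast
    · intro i
      fin_cases i
      · simp only [Matrix.cons_val_zero]
        exact mem_of_Fv_le lamstar_pos (le_of_eq hlamstar.symm)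
      · simp only [Matrix.cons_val_one, Matrix.head_cons]
        exact mem_of_Fv_le lamstar_pos hFB
  have hlam : lam c.ξ q 2 = lamstar := by
    apply le_antisymm
    · exact csInf_le ⟨0, fun l hl => hl.1⟩ hmemT
    · refine le_csInf ⟨lamstar, hmemT⟩ ?_
      rintro l ⟨hl0, v, hind, hmem⟩
      have hF : ∀ i : Fin 2, Fv c.ξ q (v i) ≤ l := fun i => Fv_le_of_mem hl0 (hmem i)
      set ic : ℤ × ℤ → ℤ := fun x => eps (n - 1) * (c.P (n - 2) * x.1 - c.Q (n - 2) * x.2)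
        with hic
      set jc : ℤ × ℤ → ℤ := fun x => eps (n - 1) * (c.Q (n - 1) * x.2 - c.P (n - 1) * x.1)
        with hjc
      have hdecomp1 : ∀ x : ℤ × ℤ, x.1 = ic x * c.Q (n - 1) + jc x * c.Q (n - 2) := by
        intro x
        simp only [hic, hjc]
        have he := eps_sq (n - 1)
        linear_combination (-(eps (n - 1)) * x.1) * hdetn1 - x.1 * he
      have hdecomp2 : ∀ x : ℤ × ℤ, x.2 = ic x * c.P (n - 1) + jc x * c.P (n - 2) := by
        intro x
        simp only [hic, hjc]
        have he := eps_sq (n - 1)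
        linear_combination (-(eps (n - 1)) * x.2) * hdetn1 - x.2 * he
      by_cases hj0 : jc (v 0) = 0 ∧ jc (v 1) = 0
      · exfalso
        rw [linearIndependent_fin2] at hind
        obtain ⟨hne, hnc⟩ := hind
        have hd11 := hdecomp1 (v 1)
        have hd12 := hdecomp2 (v 1)
        have hd01 := hdecomp1 (v 0)
        have hd02 := hdecomp2 (v 0)
        rw [hj0.2, zero_mul, add_zero] at hd11 hd12
        rw [hj0.1, zero_mul, add_zero] at hd01 hd02
        by_cases hi1 : ic (v 1) = 0
        · apply hne
          rw [hi1, zero_mul] at hd11 hd12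
          refine Prod.ext_iff.mpr ⟨?_, ?_⟩
          · show ((v 1).1 : ℝ) = 0
            rw [hd11]; norm_num
          · show ((v 1).2 : ℝ) = 0
            rw [hd12]; norm_num
        · apply hnc ((ic (v 0) : ℝ) / (ic (v 1) : ℝ))
          have hi1R : ((ic (v 1) : ℝ)) ≠ 0 := by exact_mod_cast hi1
          rw [Prod.smul_mk, smul_eq_mul, smul_eq_mul]
          refine Prod.ext_iff.mpr ⟨?_, ?_⟩
          · show (ic (v 0) : ℝ) / (ic (v 1) : ℝ) * ((v 1).1 : ℝ) = ((v 0).1 : ℝ)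
            rw [show ((v 1).1 : ℝ) = ((ic (v 1) * c.Q (n - 1) : ℤ) : ℝ) from by
                exact_mod_cast congrArg (Int.cast : ℤ → ℝ) hd11,
              show ((v 0).1 : ℝ) = ((ic (v 0) * c.Q (n - 1) : ℤ) : ℝ) from by
                exact_mod_cast congrArg (Int.cast : ℤ → ℝ) hd01]
            push_cast
            field_simp
          · show (ic (v 0) : ℝ) / (ic (v 1) : ℝ) * ((v 1).2 : ℝ) = ((v 0).2 : ℝ)
            rw [show ((v 1).2 : ℝ) = ((ic (v 1) * c.P (n - 1) : ℤ) : ℝ) from by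
                exact_mod_cast congrArg (Int.cast : ℤ → ℝ) hd12,
              show ((v 0).2 : ℝ) = ((ic (v 0) * c.P (n - 1) : ℤ) : ℝ) from by
                exact_mod_cast congrArg (Int.cast : ℤ → ℝ) hd02]
            push_cast
            field_simp
      · have hex : ∃ i : Fin 2, jc (v i) ≠ 0 := by
          by_contra hno
          push_neg at hno
          exact hj0 ⟨hno 0, hno 1⟩
        obtain ⟨i, hji⟩ := hex
        exact le_trans (hLB (v i) (ic (v i)) (jc (v i)) hji (hdecomp1 _) (hdecomp2 _)) (hF i)
  constructor
  · refine ⟨tstar, ht0, ht1, ?_⟩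
    rw [show LL c.ξ 2 q = Real.log (lam c.ξ q 2) from rfl, hlam, Lx_eq_log_Fv, hlamstar]
  · rintro v ⟨t, hta, htb, rfl⟩
    rw [show LL c.ξ 2 q = Real.log (lam c.ξ q 2) from rfl, hlam, Lx_eq_log_Fv]
    exact Real.log_le_log lamstar_pos (hmin' t hta htb)
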